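/- Let N_1,...,N_n be i.i.d. Laplace random variables with scale b > 0, and Y_n = ∑_{i=1}^n N_i. If v ≥ b√n and 0 ≤ λ ≤ 2√2·v²/b, then P(Y_n ≥ λ) ≤ exp(-λ²/(8v²)). -/

import Mathlib

open MeasureTheory Finset

/-- The Laplace distribution with scale `b`, given by density
`(1/(2b)) * exp (-|x|/b)` with respect to Lebesgue measure. -/
noncomputable def laplaceMeasure (b : ℝ) : Measure ℝ :=
  volume.withDensity (fun x => ENNReal.ofReal ((1 / (2 * b)) * Real.exp (-|x| / b)))

section Aux
open Set Real

lemma intOn_exp_neg_mul_Ioi {c : ℝ} (hc : 0 < c) :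
    IntegrableOn (fun x : ℝ => Real.exp (-(c * x))) (Set.Ioi 0) := by
  simpa [neg_mul] using exp_neg_integrableOn_Ioi 0 hc

lemma int_exp_neg_mul_Ioi {c : ℝ} (hc : 0 < c) :
    ∫ x in Set.Ioi (0:ℝ), Real.exp (-(c * x)) = c⁻¹ := by
  have := integral_comp_mul_left_Ioi (fun x => Real.exp (-x)) 0 hc
  simp only [mul_zero] at this
  rw [this, integral_exp_neg_Ioi]
  simp

lemma intOn_exp_mul_Iio {c : ℝ} (hc : 0 < c) :
    IntegrableOn (fun x : ℝ => Real.exp (c * x)) (Set.Iio 0) := by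
  have A : MeasurableEmbedding fun x : ℝ => -x :=
    (Homeomorph.neg ℝ).isClosedEmbedding.measurableEmbedding
  have hmap : Measure.map (fun x : ℝ => -x) (volume.restrict (Set.Ioi 0)) =
      volume.restrict (Set.Iio 0) := by
    have : (fun x : ℝ => -x) ⁻¹' (Set.Iio 0) = Set.Ioi 0 := by
      ext x; simp
    conv_lhs => rw [← this]
    rw [← Measure.restrict_map measurable_neg measurableSet_Iio, Measure.map_neg_eq_self]
  rw [IntegrableOn, ← hmap, A.integrable_map_iff]
  have := intOn_exp_neg_mul_Ioi hc
  refine this.congr_fun (fun x _ => ?_) measurableSet_Ioi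
  simp [Function.comp, mul_neg]

lemma int_exp_mul_Iio {c : ℝ} (hc : 0 < c) :
    ∫ x in Set.Iio (0:ℝ), Real.exp (c * x) = c⁻¹ := by
  have h1 : ∫ x in Set.Iic (0:ℝ), Real.exp (c * x) = c⁻¹ := by
    have := integral_comp_neg_Ioi (0:ℝ) (fun x => Real.exp (c * x))
    simp only [neg_zero] at this
    rw [← this]
    simpa [mul_neg, neg_mul] using int_exp_neg_mul_Ioi hc
  rw [← h1]
  exact setIntegral_congr_set Iio_ae_eq_Iic

section Lap
variable {b t : ℝ}

lemma lapd_nonneg (b : ℝ) (hb : 0 < b) (x : ℝ) : 0 ≤ (1 / (2 * b)) * Real.exp (-|x| / b) := by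
  positivity

lemma lap_fun_eq :
    (fun x : ℝ => Real.exp (t * x) * ((1 / (2 * b)) * Real.exp (-|x| / b))) =
      fun x => (1 / (2 * b)) * Real.exp (t * x - |x| / b) := by
  funext x
  rw [sub_eq_add_neg, Real.exp_add, neg_div]
  ring

lemma hc1 (hb : 0 < b) (ht : b * t < 1) : 0 < 1 / b - t := by
  rw [sub_pos, lt_div_iff₀ hb]
  linarith [mul_comm t b]

lemma hc2 (hb : 0 < b) (ht0 : 0 ≤ t) : 0 < 1 / b + t := by
  have : 0 < 1 / b := by positivity
  linarith

lemma lap_integrable_exp (hb : 0 < b) (ht0 : 0 ≤ t) (ht : b * t < 1) :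
    Integrable (fun x : ℝ => Real.exp (t * x) * ((1 / (2 * b)) * Real.exp (-|x| / b)))
      volume := by
  rw [lap_fun_eq]
  have h1 : IntegrableOn (fun x : ℝ => (1 / (2 * b)) * Real.exp (t * x - |x| / b))
      (Set.Ioi 0) := by
    refine IntegrableOn.congr_fun ((intOn_exp_neg_mul_Ioi (hc1 hb ht)).const_mul (1 / (2 * b)))
      (fun x hx => ?_) measurableSet_Ioi
    rw [abs_of_pos (show (0:ℝ) < x from hx), show t * x - x / b = -((1 / b - t) * x) by ring]
  have h2 : IntegrableOn (fun x : ℝ => (1 / (2 * b)) * Real.exp (t * x - |x| / b))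
      (Set.Iio 0) := by
    refine IntegrableOn.congr_fun ((intOn_exp_mul_Iio (hc2 hb ht0)).const_mul (1 / (2 * b)))
      (fun x hx => ?_) measurableSet_Iio
    rw [abs_of_neg (show x < (0:ℝ) from hx), show t * x - -x / b = (1 / b + t) * x by ring]
  have h3 := h2.union h1
  rw [Set.Iio_union_Ioi] at h3
  rwa [IntegrableOn, restrict_compl_singleton] at h3

lemma lap_integral_exp (hb : 0 < b) (ht0 : 0 ≤ t) (ht : b * t < 1) :
    ∫ x, Real.exp (t * x) * ((1 / (2 * b)) * Real.exp (-|x| / b)) =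
      1 / (1 - b ^ 2 * t ^ 2) := by
  rw [lap_fun_eq]
  have hIio : ∫ x in Set.Iio (0:ℝ), (1 / (2 * b)) * Real.exp (t * x - |x| / b) =
      (1 / (2 * b)) * (1 / b + t)⁻¹ := by
    rw [show ∫ x in Set.Iio (0:ℝ), (1 / (2 * b)) * Real.exp (t * x - |x| / b) =
        ∫ x in Set.Iio (0:ℝ), (1 / (2 * b)) * Real.exp ((1 / b + t) * x) from
      setIntegral_congr_fun measurableSet_Iio (fun x hx => by
        rw [abs_of_neg (show x < (0:ℝ) from hx),
          show t * x - -x / b = (1 / b + t) * x by ring])]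
    rw [integral_const_mul, int_exp_mul_Iio (hc2 hb ht0)]
  have hIoi : ∫ x in Set.Ioi (0:ℝ), (1 / (2 * b)) * Real.exp (t * x - |x| / b) =
      (1 / (2 * b)) * (1 / b - t)⁻¹ := by
    rw [show ∫ x in Set.Ioi (0:ℝ), (1 / (2 * b)) * Real.exp (t * x - |x| / b) =
        ∫ x in Set.Ioi (0:ℝ), (1 / (2 * b)) * Real.exp (-((1 / b - t) * x)) from
      setIntegral_congr_fun measurableSet_Ioi (fun x hx => by
        rw [abs_of_pos (show (0:ℝ) < x from hx),
          show t * x - x / b = -((1 / b - t) * x) by ring])]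
    rw [integral_const_mul, int_exp_neg_mul_Ioi (hc1 hb ht)]
  have hint := lap_integrable_exp hb ht0 ht
  rw [lap_fun_eq] at hint
  have hsplit : ∫ x, (1 / (2 * b)) * Real.exp (t * x - |x| / b) =
      (∫ x in Set.Iio (0:ℝ), (1 / (2 * b)) * Real.exp (t * x - |x| / b)) +
      ∫ x in Set.Ioi (0:ℝ), (1 / (2 * b)) * Real.exp (t * x - |x| / b) := by
    rw [setIntegral_congr_set Iio_ae_eq_Iic,
      intervalIntegral.integral_Iic_add_Ioi hint.integrableOn hint.integrableOn]
  rw [hsplit, hIio, hIoi]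
  have hbt : 0 ≤ b * t := mul_nonneg hb.le ht0
  have hb2 : (0:ℝ) < 1 - b ^ 2 * t ^ 2 := by nlinarith
  have h1 := (hc1 hb ht).ne'
  have h2 := (hc2 hb ht0).ne'
  have hb' := hb.ne'
  have hb2' := hb2.ne'
  have h4 : (1:ℝ) - b * t ≠ 0 := by nlinarith
  have h5 : (1:ℝ) + b * t ≠ 0 := by nlinarith
  field_simp
  ring

end Lap

lemma laplace_exp_smul_eq {b t : ℝ} (hb : 0 < b) :
    (fun x : ℝ => (((1 / (2 * b)) * Real.exp (-|x| / b)).toNNReal : NNReal) • Real.exp (t * x)) =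
      fun x => Real.exp (t * x) * ((1 / (2 * b)) * Real.exp (-|x| / b)) := by
  funext x
  rw [NNReal.smul_def, Real.coe_toNNReal _ (lapd_nonneg b hb x), smul_eq_mul, mul_comm]

lemma laplace_density_meas (b : ℝ) :
    Measurable fun x : ℝ => ((1 / (2 * b)) * Real.exp (-|x| / b)) := by
  measurability

lemma laplace_integrable_exp {b t : ℝ} (hb : 0 < b) (ht0 : 0 ≤ t) (ht : b * t < 1) :
    Integrable (fun x : ℝ => Real.exp (t * x)) (laplaceMeasure b) := by
  have hmeq : laplaceMeasure b = volume.withDensity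
      (fun x => ((((1 / (2 * b)) * Real.exp (-|x| / b)).toNNReal : NNReal) : ENNReal)) := rfl
  rw [hmeq, integrable_withDensity_iff_integrable_smul (laplace_density_meas b).real_toNNReal,
    laplace_exp_smul_eq hb]
  exact lap_integrable_exp hb ht0 ht

lemma laplace_integral_exp {b t : ℝ} (hb : 0 < b) (ht0 : 0 ≤ t) (ht : b * t < 1) :
    ∫ x, Real.exp (t * x) ∂(laplaceMeasure b) = 1 / (1 - b ^ 2 * t ^ 2) := by
  have hmeq : laplaceMeasure b = volume.withDensity
      (fun x => ((((1 / (2 * b)) * Real.exp (-|x| / b)).toNNReal : NNReal) : ENNReal)) := rfl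
  rw [hmeq, integral_withDensity_eq_integral_smul (laplace_density_meas b).real_toNNReal]
  rw [show (fun x : ℝ => (((1 / (2 * b)) * Real.exp (-|x| / b)).toNNReal : NNReal) •
      Real.exp (t * x)) = fun x => Real.exp (t * x) * ((1 / (2 * b)) * Real.exp (-|x| / b)) from
    laplace_exp_smul_eq hb]
  exact lap_integral_exp hb ht0 ht


end Aux

/-- Concentration for sums of i.i.d. Laplace(b) variables: if `v ≥ b√n` and
`0 ≤ λ ≤ 2√2 v²/b`, then `P(∑ N_i ≥ λ) ≤ exp(-λ²/(8v²))`. -/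
theorem laplace_sum_tail_bound {Ω : Type*} [MeasurableSpace Ω]
    (ℙ : Measure Ω) [IsProbabilityMeasure ℙ]
    (n : ℕ) (N : Fin n → Ω → ℝ) (hmeas : ∀ i, Measurable (N i))
    (b : ℝ) (hb : 0 < b)
    (hindep : ProbabilityTheory.iIndepFun N ℙ)
    (hlaw : ∀ i, Measure.map (N i) ℙ = laplaceMeasure b)
    (v lam : ℝ) (hv : b * Real.sqrt n ≤ v)
    (hlam0 : 0 ≤ lam) (hlam : lam ≤ 2 * Real.sqrt 2 * v ^ 2 / b) :
    ℙ {ω | (∑ i, N i ω) ≥ lam} ≤ ENNReal.ofReal (Real.exp (-lam ^ 2 / (8 * v ^ 2))) := by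
  rcases eq_or_lt_of_le hlam0 with hlamz | hlampos
  · rw [← hlamz]
    simp only [ne_eq, OfNat.ofNat_ne_zero, not_false_eq_true, zero_pow, neg_zero, zero_div,
      Real.exp_zero, ENNReal.ofReal_one]
    exact prob_le_one
  have hv0 : 0 ≤ v := le_trans (by positivity) hv
  have hvpos : 0 < v := by
    rcases eq_or_lt_of_le hv0 with h | h
    · exfalso
      rw [← h] at hlam
      simp only [ne_eq, OfNat.ofNat_ne_zero, not_false_eq_true, zero_pow, mul_zero,
        zero_div] at hlam
      linarith
    · exact h
  set t := lam / (4 * v ^ 2) with htdef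
  have ht0 : 0 ≤ t := by positivity
  have hsqrt2 : Real.sqrt 2 < 2 := by
    nlinarith [Real.sq_sqrt (show (0:ℝ) ≤ 2 by norm_num), Real.sqrt_nonneg 2]
  have hbt : b * t ≤ Real.sqrt 2 / 2 := by
    have h1 : b * t ≤ b * ((2 * Real.sqrt 2 * v ^ 2 / b) / (4 * v ^ 2)) := by
      rw [htdef]; gcongr
    have h2 : b * ((2 * Real.sqrt 2 * v ^ 2 / b) / (4 * v ^ 2)) = Real.sqrt 2 / 2 := by
      field_simp
      ring
    linarith
  have hbt1 : b * t < 1 := lt_of_le_of_lt hbt (by linarith)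
  have hx12 : b ^ 2 * t ^ 2 ≤ 1 / 2 := by
    have hbtnn : 0 ≤ b * t := mul_nonneg hb.le ht0
    nlinarith [Real.sq_sqrt (show (0:ℝ) ≤ 2 by norm_num)]
  have hxpos : (0:ℝ) < 1 - b ^ 2 * t ^ 2 := by linarith
  -- integrability and mgf of each variable
  have hInt : ∀ i, Integrable (fun ω => Real.exp (t * N i ω)) ℙ := by
    intro i
    have h := laplace_integrable_exp hb ht0 hbt1
    rw [← hlaw i] at h
    exact (integrable_map_measure h.aestronglyMeasurable (hmeas i).aemeasurable).mp h
  have hmgf : ∀ i, ProbabilityTheory.mgf (N i) ℙ t = 1 / (1 - b ^ 2 * t ^ 2) := by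
    intro i
    have hmap := integral_map (μ := ℙ) (φ := N i) (hmeas i).aemeasurable
      (f := fun y => Real.exp (t * y))
      ((measurable_const.mul measurable_id).exp.aestronglyMeasurable)
    rw [ProbabilityTheory.mgf, ← hmap, hlaw i]
    exact laplace_integral_exp hb ht0 hbt1
  have hIntSum : Integrable (fun ω => Real.exp (t * (∑ i, N i) ω)) ℙ :=
    hindep.integrable_exp_mul_sum hmeas (fun i _ => hInt i)
  have chern := ProbabilityTheory.measure_ge_le_exp_mul_mgf (X := ∑ i, N i) (μ := ℙ)
    lam ht0 hIntSum
  have hmgfsum : ProbabilityTheory.mgf (∑ i, N i) ℙ t = (1 / (1 - b ^ 2 * t ^ 2)) ^ n := by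
    rw [hindep.mgf_sum hmeas Finset.univ]
    simp [hmgf, Finset.prod_const]
  rw [hmgfsum] at chern
  -- bound the mgf
  have hMexp : 1 / (1 - b ^ 2 * t ^ 2) ≤ Real.exp (2 * (b ^ 2 * t ^ 2)) := by
    rw [div_le_iff₀ hxpos]
    nlinarith [Real.add_one_le_exp (2 * (b ^ 2 * t ^ 2)), sq_nonneg (b * t),
      Real.exp_nonneg (2 * (b ^ 2 * t ^ 2))]
  have hnb : (n : ℝ) * b ^ 2 ≤ v ^ 2 := by
    nlinarith [Real.sq_sqrt (Nat.cast_nonneg n : (0:ℝ) ≤ n), Real.sqrt_nonneg (n:ℝ),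
      mul_nonneg hb.le (Real.sqrt_nonneg (n:ℝ))]
  have hfinal : Real.exp (-t * lam) * (1 / (1 - b ^ 2 * t ^ 2)) ^ n ≤
      Real.exp (-lam ^ 2 / (8 * v ^ 2)) := by
    have h1 : (1 / (1 - b ^ 2 * t ^ 2)) ^ n ≤ Real.exp (2 * (b ^ 2 * t ^ 2)) ^ n :=
      pow_le_pow_left₀ (le_of_lt (one_div_pos.mpr hxpos)) hMexp n
    have h2 : Real.exp (2 * (b ^ 2 * t ^ 2)) ^ n = Real.exp (n * (2 * (b ^ 2 * t ^ 2))) := by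
      rw [← Real.exp_nat_mul]
    have h3 : Real.exp (-t * lam) * Real.exp (n * (2 * (b ^ 2 * t ^ 2))) =
        Real.exp (-t * lam + n * (2 * (b ^ 2 * t ^ 2))) := (Real.exp_add _ _).symm
    have h4 : -t * lam + (n : ℝ) * (2 * (b ^ 2 * t ^ 2)) ≤ -lam ^ 2 / (8 * v ^ 2) := by
      have heq : -t * lam + 2 * v ^ 2 * t ^ 2 = -lam ^ 2 / (8 * v ^ 2) := by
        rw [htdef]
        field_simp
        ring
      nlinarith [sq_nonneg t]
    calc Real.exp (-t * lam) * (1 / (1 - b ^ 2 * t ^ 2)) ^ n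
        ≤ Real.exp (-t * lam) * Real.exp (2 * (b ^ 2 * t ^ 2)) ^ n := by
          gcongr
      _ = Real.exp (-t * lam + n * (2 * (b ^ 2 * t ^ 2))) := by rw [h2, h3]
      _ ≤ Real.exp (-lam ^ 2 / (8 * v ^ 2)) := Real.exp_le_exp.mpr h4
  have hset : {ω | (∑ i, N i ω) ≥ lam} = {ω | lam ≤ (∑ i, N i) ω} := by
    ext ω; simp [Finset.sum_apply]
  rw [hset, ENNReal.le_ofReal_iff_toReal_le (measure_ne_top ℙ _) (Real.exp_nonneg _)]
  exact le_trans chern hfinal
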